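/- Fix s, t, r ∈ [0,1] and set m = (1−r)s + rt. Let f₀, f₁, g₀, g₁ be Borel functions from ℝⁿ to ℝ ∪ {+∞} such that (1−r) g₀((1−s)x₀ + s x₁) + r g₁((1−t)x₀ + t x₁) ≤ (1−m) f₀(x₀) + m f₁(x₁) for all x₀, x₁ ∈ ℝⁿ. Then (∫ e^{−g₀})^{1−r} (∫ e^{−g₁})^{r} ≥ (∫ e^{−f₀})^{1−m} (∫ e^{−f₁})^{m}. -/

import Mathlib

open MeasureTheory ENNReal Set Filter Topology

noncomputable def expNeg (y : EReal) : ℝ≥0∞ :=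
  if y = ⊤ then 0 else ENNReal.ofReal (Real.exp (-y.toReal))

lemma expNeg_top : expNeg ⊤ = 0 := by simp [expNeg]

lemma expNeg_coe (x : ℝ) : expNeg (x : EReal) = ENNReal.ofReal (Real.exp (-x)) := by
  simp [expNeg]

lemma expNeg_zero : expNeg 0 = 1 := by
  rw [show ((0 : EReal)) = ((0:ℝ) : EReal) by simp, expNeg_coe]
  simp

lemma measurable_expNeg : Measurable expNeg := by
  have : expNeg = fun y : EReal =>
      Set.indicator {(⊤ : EReal)}ᶜ (fun y => ENNReal.ofReal (Real.exp (-y.toReal))) y := by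
    funext y
    by_cases hy : y = ⊤ <;> simp [expNeg, hy]
  rw [this]
  exact Measurable.indicator
    ((Real.measurable_exp.comp measurable_ereal_toReal.neg).ennreal_ofReal)
    (measurableSet_singleton _).compl

lemma coe_mul_ne_bot {c : ℝ} (hc : 0 ≤ c) {a : EReal} (ha : a ≠ ⊥) : (c : EReal) * a ≠ ⊥ := by
  rcases eq_or_lt_of_le hc with hc0 | hcpos
  · simp [← hc0]
  · induction a with
    | bot => exact absurd rfl ha
    | coe a => rw [← EReal.coe_mul]; exact EReal.coe_ne_bot _
    | top => rw [EReal.coe_mul_top_of_pos hcpos]; exact (by simp : (⊤:EReal) ≠ ⊥)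

lemma add_ne_bot {a b : EReal} (ha : a ≠ ⊥) (hb : b ≠ ⊥) : a + b ≠ ⊥ := by
  induction a with
  | bot => exact absurd rfl ha
  | coe a =>
    induction b with
    | bot => exact absurd rfl hb
    | coe b => rw [← EReal.coe_add]; exact EReal.coe_ne_bot _
    | top => simp
  | top =>
    rw [EReal.top_add_of_ne_bot hb]; exact (by simp : (⊤:EReal) ≠ ⊥)

lemma expNeg_coe_mul {c : ℝ} (hc : 0 ≤ c) {a : EReal} (ha : a ≠ ⊥) :
    expNeg ((c : EReal) * a) = expNeg a ^ c := by
  rcases eq_or_lt_of_le hc with hc0 | hcpos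
  · rw [← hc0]; simp only [EReal.coe_zero, zero_mul, ENNReal.rpow_zero, expNeg_zero]
  · induction a with
    | bot => exact absurd rfl ha
    | coe a =>
      rw [← EReal.coe_mul, expNeg_coe, expNeg_coe,
        ENNReal.ofReal_rpow_of_nonneg (Real.exp_nonneg _) hc]
      rw [← Real.exp_mul]
      congr 1
      ring
    | top =>
      rw [EReal.coe_mul_top_of_pos hcpos, expNeg_top, ENNReal.zero_rpow_of_pos hcpos]

lemma expNeg_add {a b : EReal} (ha : a ≠ ⊥) (hb : b ≠ ⊥) :
    expNeg (a + b) = expNeg a * expNeg b := by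
  induction a with
  | bot => exact absurd rfl ha
  | coe a =>
    induction b with
    | bot => exact absurd rfl hb
    | coe b =>
      rw [← EReal.coe_add, expNeg_coe, expNeg_coe, expNeg_coe, ← ENNReal.ofReal_mul
        (Real.exp_nonneg _), ← Real.exp_add]
      ring_nf
    | top =>
      rw [EReal.add_top_of_ne_bot ha, expNeg_top, mul_comm]
      simp [expNeg_top]
  | top =>
    rw [EReal.top_add_of_ne_bot hb, expNeg_top]
    simp

lemma expNeg_anti {a b : EReal} (ha : a ≠ ⊥) (hab : a ≤ b) : expNeg b ≤ expNeg a := by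
  induction b with
  | bot => rw [le_bot_iff.mp hab]
  | coe b =>
    induction a with
    | bot => exact absurd rfl ha
    | coe a =>
      rw [expNeg_coe, expNeg_coe]
      exact ENNReal.ofReal_le_ofReal (Real.exp_le_exp.2 (by
        simpa using EReal.coe_le_coe_iff.mp hab))
    | top => simp at hab
  | top => rw [expNeg_top]; exact zero_le

lemma expNeg_hyp {a₀ a₁ b₀ b₁ : EReal} (ha₀ : a₀ ≠ ⊥) (ha₁ : a₁ ≠ ⊥)
    (hb₀ : b₀ ≠ ⊥) (hb₁ : b₁ ≠ ⊥)
    {c₀ c₁ e₀ e₁ : ℝ} (hc₀ : 0 ≤ c₀) (hc₁ : 0 ≤ c₁) (he₀ : 0 ≤ e₀) (he₁ : 0 ≤ e₁)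
    (h : (c₀ : EReal) * b₀ + (c₁ : EReal) * b₁ ≤ (e₀ : EReal) * a₀ + (e₁ : EReal) * a₁) :
    expNeg a₀ ^ e₀ * expNeg a₁ ^ e₁ ≤ expNeg b₀ ^ c₀ * expNeg b₁ ^ c₁ := by
  rw [← expNeg_coe_mul he₀ ha₀, ← expNeg_coe_mul he₁ ha₁,
    ← expNeg_add (coe_mul_ne_bot he₀ ha₀) (coe_mul_ne_bot he₁ ha₁),
    ← expNeg_coe_mul hc₀ hb₀, ← expNeg_coe_mul hc₁ hb₁,
    ← expNeg_add (coe_mul_ne_bot hc₀ hb₀) (coe_mul_ne_bot hc₁ hb₁)]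
  exact expNeg_anti (add_ne_bot (coe_mul_ne_bot hc₀ hb₀) (coe_mul_ne_bot hc₁ hb₁)) h

lemma rpow_add_nonneg' {x a b : ℝ} (hx : 0 ≤ x) (ha : 0 ≤ a) (hb : 0 ≤ b) :
    x ^ (a + b) = x ^ a * x ^ b := by
  rcases eq_or_lt_of_le hx with hx0 | hxpos
  · rcases eq_or_lt_of_le ha with ha0 | hapos
    · simp [← ha0, ← hx0]
    · rcases eq_or_lt_of_le hb with hb0 | hbpos
      · simp [← hb0, ← hx0]
      · rw [← hx0]
        rw [Real.zero_rpow (by linarith : (0:ℝ) < a + b).ne', Real.zero_rpow hapos.ne',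
          Real.zero_rpow hbpos.ne', mul_zero]
  · exact Real.rpow_add hxpos a b

lemma rpow_interp {d₀ d₁ : ℝ} (h₀ : 0 ≤ d₀) (h₁ : 0 ≤ d₁) {r s t m : ℝ}
    (hr0 : 0 ≤ r) (hr1 : r ≤ 1) (hs0 : 0 ≤ s) (hs1 : s ≤ 1) (ht0 : 0 ≤ t) (ht1 : t ≤ 1)
    (hm : m = (1 - r) * s + r * t) :
    d₀ ^ (1 - m) * d₁ ^ m ≤ ((1 - s) * d₀ + s * d₁) ^ (1 - r) * ((1 - t) * d₀ + t * d₁) ^ r := by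
  have e1 : d₀ ^ (1 - m) * d₁ ^ m
      = (d₀ ^ (1 - s) * d₁ ^ s) ^ (1 - r) * (d₀ ^ (1 - t) * d₁ ^ t) ^ r := by
    rw [Real.mul_rpow (by positivity) (by positivity),
      Real.mul_rpow (by positivity) (by positivity),
      ← Real.rpow_mul h₀, ← Real.rpow_mul h₁, ← Real.rpow_mul h₀, ← Real.rpow_mul h₁]
    have exp0 : (1 : ℝ) - m = (1 - s) * (1 - r) + (1 - t) * r := by rw [hm]; ring
    have exp1 : m = s * (1 - r) + t * r := by rw [hm]; ring
    rw [mul_mul_mul_comm,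
      ← rpow_add_nonneg' h₀ (mul_nonneg (by linarith) (by linarith))
        (mul_nonneg (by linarith) hr0),
      ← rpow_add_nonneg' h₁ (mul_nonneg hs0 (by linarith)) (mul_nonneg ht0 hr0),
      ← exp0, ← exp1]
  rw [e1]
  have g1 : d₀ ^ (1 - s) * d₁ ^ s ≤ (1 - s) * d₀ + s * d₁ :=
    Real.geom_mean_le_arith_mean2_weighted (by linarith) hs0 h₀ h₁ (by ring)
  have g2 : d₀ ^ (1 - t) * d₁ ^ t ≤ (1 - t) * d₀ + t * d₁ :=
    Real.geom_mean_le_arith_mean2_weighted (by linarith) ht0 h₀ h₁ (by ring)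
  have hg1 : (0:ℝ) ≤ d₀ ^ (1 - s) * d₁ ^ s := by positivity
  have hg2 : (0:ℝ) ≤ d₀ ^ (1 - t) * d₁ ^ t := by positivity
  exact mul_le_mul (Real.rpow_le_rpow hg1 g1 (by linarith))
    (Real.rpow_le_rpow hg2 g2 hr0) (Real.rpow_nonneg hg2 _)
    (Real.rpow_nonneg (by linarith [g1, hg1]) _)

-- ENNReal-lifted version
lemma rpow_interp_ennreal {d₀ d₁ : ℝ} (h₀ : 0 ≤ d₀) (h₁ : 0 ≤ d₁) {r s t m : ℝ}
    (hr0 : 0 ≤ r) (hr1 : r ≤ 1) (hs0 : 0 ≤ s) (hs1 : s ≤ 1) (ht0 : 0 ≤ t) (ht1 : t ≤ 1)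
    (hm : m = (1 - r) * s + r * t) (hm0 : 0 ≤ m) (hm1 : m ≤ 1) :
    ENNReal.ofReal d₀ ^ (1 - m) * ENNReal.ofReal d₁ ^ m
      ≤ ENNReal.ofReal ((1 - s) * d₀ + s * d₁) ^ (1 - r)
        * ENNReal.ofReal ((1 - t) * d₀ + t * d₁) ^ r := by
  rw [ENNReal.ofReal_rpow_of_nonneg h₀ (by linarith), ENNReal.ofReal_rpow_of_nonneg h₁ hm0,
    ENNReal.ofReal_rpow_of_nonneg (by nlinarith) (by linarith),
    ENNReal.ofReal_rpow_of_nonneg (by nlinarith) hr0,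
    ← ENNReal.ofReal_mul (Real.rpow_nonneg (by positivity) _),
    ← ENNReal.ofReal_mul (Real.rpow_nonneg (by nlinarith) _)]
  exact ENNReal.ofReal_le_ofReal (rpow_interp h₀ h₁ hr0 hr1 hs0 hs1 ht0 ht1 hm)

noncomputable def cdf (F : ℝ → ℝ≥0∞) (x : ℝ) : ℝ := (∫⁻ y in Iic x, F y).toReal

noncomputable def quant (F : ℝ → ℝ≥0∞) (c : ℝ) : ℝ := sInf {x | c ≤ cdf F x}

section CDF

variable {F : ℝ → ℝ≥0∞} {M R : ℝ}

lemma setJ_le (F : ℝ → ℝ≥0∞) (x : ℝ) : ∫⁻ y in Iic x, F y ≤ ∫⁻ y, F y :=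
  lintegral_mono' Measure.restrict_le_self le_rfl

lemma cdf_mono (hJtop : (∫⁻ y, F y) ≠ ⊤) : Monotone (cdf F) := by
  intro a b hab
  exact ENNReal.toReal_mono (ne_top_of_le_ne_top hJtop (setJ_le F b))
    (lintegral_mono' (Measure.restrict_mono (Iic_subset_Iic.2 hab) le_rfl) le_rfl)

lemma cdf_split {a b : ℝ} (hab : a ≤ b) :
    (∫⁻ y in Iic b, F y) = (∫⁻ y in Iic a, F y) + ∫⁻ y in Ioc a b, F y := by
  rw [← lintegral_union measurableSet_Ioc (Iic_disjoint_Ioc le_rfl), Iic_union_Ioc_eq_Iic hab]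

lemma cdf_diff_eq (hJtop : (∫⁻ y, F y) ≠ ⊤) {a b : ℝ} (hab : a ≤ b) :
    cdf F b - cdf F a = (∫⁻ y in Ioc a b, F y).toReal := by
  have h := cdf_split (F := F) hab
  have h1 : (∫⁻ y in Iic a, F y) ≠ ⊤ := ne_top_of_le_ne_top hJtop (setJ_le F a)
  have h2 : (∫⁻ y in Ioc a b, F y) ≠ ⊤ :=
    ne_top_of_le_ne_top hJtop (lintegral_mono' Measure.restrict_le_self le_rfl)
  unfold cdf
  rw [h, ENNReal.toReal_add h1 h2]
  ring

lemma cdf_lipschitz (hJtop : (∫⁻ y, F y) ≠ ⊤) (hM : 0 ≤ M)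
    (hbd : ∀ x, F x ≤ ENNReal.ofReal M) {a b : ℝ} (hab : a ≤ b) :
    cdf F b - cdf F a ≤ M * (b - a) := by
  rw [cdf_diff_eq hJtop hab]
  have hineq : (∫⁻ y in Ioc a b, F y) ≤ ENNReal.ofReal (M * (b - a)) := by
    calc ∫⁻ y in Ioc a b, F y ≤ ∫⁻ _ in Ioc a b, ENNReal.ofReal M :=
          setLIntegral_mono' measurableSet_Ioc fun x _ => hbd x
      _ = ENNReal.ofReal M * volume (Ioc a b) := setLIntegral_const _ _
      _ = ENNReal.ofReal (M * (b - a)) := by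
          rw [Real.volume_Ioc, ← ENNReal.ofReal_mul hM]
  calc (∫⁻ y in Ioc a b, F y).toReal ≤ (ENNReal.ofReal (M * (b-a))).toReal :=
        ENNReal.toReal_mono ENNReal.ofReal_ne_top hineq
    _ = M * (b - a) := ENNReal.toReal_ofReal (by nlinarith)

lemma cdf_continuous (hJtop : (∫⁻ y, F y) ≠ ⊤) (hM : 0 ≤ M)
    (hbd : ∀ x, F x ≤ ENNReal.ofReal M) : Continuous (cdf F) := by
  have : LipschitzWith (Real.toNNReal M) (cdf F) := by
    apply LipschitzWith.of_dist_le_mul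
    intro x y
    rw [Real.dist_eq, Real.dist_eq, Real.coe_toNNReal _ hM]
    rcases le_total x y with hxy | hxy
    · rw [abs_of_nonpos (by linarith [cdf_mono hJtop hxy] : cdf F x - cdf F y ≤ 0),
        abs_of_nonpos (by linarith)]
      have := cdf_lipschitz hJtop hM hbd hxy
      linarith
    · rw [abs_of_nonneg (by linarith [cdf_mono hJtop hxy] : 0 ≤ cdf F x - cdf F y),
        abs_of_nonneg (by linarith)]
      have := cdf_lipschitz hJtop hM hbd hxy
      linarith
  exact this.continuous

lemma cdf_of_ge (hsupp : ∀ x, x ∉ Icc (-R) R → F x = 0) {x : ℝ} (hx : R ≤ x) :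
    cdf F x = (∫⁻ y, F y).toReal := by
  unfold cdf
  congr 1
  have hsplit := lintegral_add_compl (f := F) (μ := volume) (measurableSet_Iic (a := x))
  have h0 : ∫⁻ y in (Iic x)ᶜ, F y = 0 := by
    rw [show (∫⁻ y in (Iic x)ᶜ, F y) = ∫⁻ _ in (Iic x)ᶜ, 0 from
      setLIntegral_congr_fun measurableSet_Iic.compl (fun y hy => by
        refine hsupp y fun hy' => hy ?_
        exact le_trans hy'.2 hx), lintegral_zero]
  rw [← hsplit, h0, add_zero]

lemma cdf_of_le (hsupp : ∀ x, x ∉ Icc (-R) R → F x = 0) {x : ℝ} (hx : x < -R) :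
    cdf F x = 0 := by
  unfold cdf
  have h0 : ∫⁻ y in Iic x, F y = 0 := by
    rw [show (∫⁻ y in Iic x, F y) = ∫⁻ _ in Iic x, 0 from
      setLIntegral_congr_fun measurableSet_Iic (fun y hy => by
        refine hsupp y fun hy' => ?_
        simp only [mem_Iic] at hy
        linarith [hy'.1]), lintegral_zero]
  simp [h0]

end CDF

section Quant

variable {F : ℝ → ℝ≥0∞} {M R : ℝ}

lemma quant_spec (hM : 0 ≤ M) (hbd : ∀ x, F x ≤ ENNReal.ofReal M)
    (hsupp : ∀ x, x ∉ Icc (-R) R → F x = 0) (hJtop : (∫⁻ y, F y) ≠ ⊤)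
    {c : ℝ} (hc0 : 0 < c) (hcJ : c ≤ (∫⁻ y, F y).toReal) :
    cdf F (quant F c) = c ∧ quant F c ∈ Icc (-R) R := by
  set S := {x | c ≤ cdf F x} with hS
  have hcont := cdf_continuous hJtop hM hbd
  have hRS : R ∈ S := by
    rw [hS, mem_setOf, cdf_of_ge hsupp le_rfl]; exact hcJ
  have hSne : S.Nonempty := ⟨R, hRS⟩
  have hlb : ∀ y ∈ S, -R ≤ y := by
    intro y hy
    by_contra h
    push_neg at h
    rw [hS, mem_setOf, cdf_of_le hsupp h] at hy
    linarith
  have hSbd : BddBelow S := ⟨-R, hlb⟩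
  have hclosed : IsClosed S := isClosed_le continuous_const hcont
  have hmem : quant F c ∈ S := hclosed.csInf_mem hSne hSbd
  have hub : cdf F (quant F c) ≤ c := by
    have hlt : ∀ x, x < quant F c → cdf F x ≤ c := by
      intro x hx
      by_contra h
      push_neg at h
      exact absurd (csInf_le hSbd (le_of_lt h : x ∈ S)) (not_le.2 hx)
    have htd : Tendsto (cdf F) (𝓝[<] (quant F c)) (𝓝 (cdf F (quant F c))) :=
      (hcont.tendsto _).mono_left nhdsWithin_le_nhds
    refine le_of_tendsto htd ?_
    filter_upwards [self_mem_nhdsWithin] with x hx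
    exact hlt x hx
  exact ⟨le_antisymm hub hmem, le_csInf hSne hlb, csInf_le hSbd hRS⟩

/-- clamped quantile transport map -/
noncomputable def qmap (F : ℝ → ℝ≥0∞) (R : ℝ) (w : ℝ) : ℝ :=
  if w ≤ 0 then -R else if 1 ≤ w then R else quant F (w * (∫⁻ y, F y).toReal)

lemma qmap_of_nonpos {w : ℝ} (h : w ≤ 0) : qmap F R w = -R := if_pos h

lemma qmap_of_ge {w : ℝ} (h : 1 ≤ w) : qmap F R w = R := by
  rw [qmap, if_neg (by linarith), if_pos h]

lemma qmap_of_mem {w : ℝ} (hw : w ∈ Ioo (0:ℝ) 1) :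
    qmap F R w = quant F (w * (∫⁻ y, F y).toReal) := by
  rw [qmap, if_neg (not_le.2 hw.1), if_neg (not_le.2 hw.2)]

lemma qmap_cdf (hM : 0 ≤ M) (hbd : ∀ x, F x ≤ ENNReal.ofReal M)
    (hsupp : ∀ x, x ∉ Icc (-R) R → F x = 0)
    (hJ0 : (∫⁻ y, F y) ≠ 0) (hJtop : (∫⁻ y, F y) ≠ ⊤)
    {w : ℝ} (hw : w ∈ Ioo (0:ℝ) 1) :
    cdf F (qmap F R w) = w * (∫⁻ y, F y).toReal ∧ qmap F R w ∈ Icc (-R) R := by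
  have hJr : 0 < (∫⁻ y, F y).toReal := ENNReal.toReal_pos hJ0 hJtop
  have h1 : ¬ w ≤ 0 := not_le.2 hw.1
  have h2 : ¬ 1 ≤ w := not_le.2 hw.2
  rw [qmap, if_neg h1, if_neg h2]
  exact quant_spec hM hbd hsupp hJtop (mul_pos hw.1 hJr)
    (by nlinarith [hw.2])

lemma qmap_mono (hM : 0 ≤ M) (hbd : ∀ x, F x ≤ ENNReal.ofReal M)
    (hsupp : ∀ x, x ∉ Icc (-R) R → F x = 0) (hR : 0 ≤ R)
    (hJ0 : (∫⁻ y, F y) ≠ 0) (hJtop : (∫⁻ y, F y) ≠ ⊤) :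
    Monotone (qmap F R) := by
  have hJr : 0 < (∫⁻ y, F y).toReal := ENNReal.toReal_pos hJ0 hJtop
  intro a b hab
  rcases le_or_gt a 0 with ha | ha
  · rw [qmap_of_nonpos ha]
    rcases le_or_gt b 0 with hb | hb
    · rw [qmap_of_nonpos hb]
    · rcases le_or_gt 1 b with hb1 | hb1
      · rw [qmap_of_ge hb1]; linarith
      · exact (qmap_cdf hM hbd hsupp hJ0 hJtop ⟨hb, hb1⟩).2.1
  · rcases le_or_gt 1 a with ha1 | ha1
    · rw [qmap_of_ge ha1, qmap_of_ge (le_trans ha1 hab)]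
    · have haI : a ∈ Ioo (0:ℝ) 1 := ⟨ha, ha1⟩
      rcases le_or_gt 1 b with hb1 | hb1
      · rw [qmap_of_ge hb1]
        exact (qmap_cdf hM hbd hsupp hJ0 hJtop haI).2.2
      · have hbI : b ∈ Ioo (0:ℝ) 1 := ⟨lt_of_lt_of_le ha hab, hb1⟩
        rw [qmap_of_mem haI, qmap_of_mem hbI]
        -- monotone via monotonicity of quant: use csInf mono on nested sets
        apply le_csInf
        · exact ⟨R, by rw [mem_setOf, cdf_of_ge hsupp le_rfl]; nlinarith⟩
        · intro y hy
          apply csInf_le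
          · refine ⟨-R, fun z hz => ?_⟩
            by_contra h
            push_neg at h
            rw [mem_setOf, cdf_of_le hsupp h] at hz
            nlinarith
          · rw [mem_setOf] at hy ⊢
            nlinarith

lemma qmap_strict (hM : 0 ≤ M) (hbd : ∀ x, F x ≤ ENNReal.ofReal M)
    (hsupp : ∀ x, x ∉ Icc (-R) R → F x = 0) (hR : 0 ≤ R)
    (hJ0 : (∫⁻ y, F y) ≠ 0) (hJtop : (∫⁻ y, F y) ≠ ⊤) :
    StrictMonoOn (qmap F R) (Ioo (0:ℝ) 1) := by
  intro a ha b hb hab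
  have h1 := (qmap_cdf hM hbd hsupp hJ0 hJtop ha).1
  have h2 := (qmap_cdf hM hbd hsupp hJ0 hJtop hb).1
  have hle := qmap_mono hM hbd hsupp hR hJ0 hJtop (le_of_lt hab)
  rcases eq_or_lt_of_le hle with heq | hlt
  · exfalso
    have hJr : 0 < (∫⁻ y, F y).toReal := ENNReal.toReal_pos hJ0 hJtop
    rw [heq] at h1
    rw [h1] at h2
    nlinarith
  · exact hlt

lemma cdf_ae_deriv (hF : Measurable F) (hM : 0 ≤ M)
    (hbd : ∀ x, F x ≤ ENNReal.ofReal M) (hJtop : (∫⁻ y, F y) ≠ ⊤) :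
    ∀ᵐ x, HasDerivAt (cdf F) ((F x).toReal) x := by
  have hmono := cdf_mono (F := F) hJtop
  have hcont := cdf_continuous hJtop hM hbd
  have hsf : ∀ x, hmono.stieltjesFunction x = cdf F x := by
    intro x
    rw [hmono.stieltjesFunction_eq]
    exact rightLim_eq_of_tendsto ((hcont.tendsto x).mono_left nhdsWithin_le_nhds)
  have hmeq : hmono.stieltjesFunction.measure = volume.withDensity F := by
    refine MeasureTheory.Measure.ext_of_Ioc _ _ (fun a b hab => ?_)
    rw [StieltjesFunction.measure_Ioc, withDensity_apply _ measurableSet_Ioc,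
      hsf, hsf, cdf_diff_eq hJtop hab.le, ENNReal.ofReal_toReal
      (ne_top_of_le_ne_top hJtop (lintegral_mono' Measure.restrict_le_self le_rfl))]
  have hrn : (volume.withDensity F).rnDeriv volume =ᵐ[volume] F :=
    Measure.rnDeriv_withDensity volume hF
  filter_upwards [hmono.ae_hasDerivAt, hrn] with x hx h2
  rw [hmeq] at hx
  rw [h2] at hx
  exact hx

lemma transport_exists (hF : Measurable F) (hM : 0 ≤ M) (hR : 0 ≤ R)
    (hbd : ∀ x, F x ≤ ENNReal.ofReal M) (hsupp : ∀ x, x ∉ Icc (-R) R → F x = 0)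
    (hJ0 : (∫⁻ y, F y) ≠ 0) (hJtop : (∫⁻ y, F y) ≠ ⊤) :
    ∃ d : ℝ → ℝ, Measurable d ∧ (∀ w, 0 ≤ d w) ∧
      (∀ᵐ w, w ∈ Ioo (0:ℝ) 1 → HasDerivAt (qmap F R) (d w) w ∧
        F (qmap F R w) * ENNReal.ofReal (d w) = ∫⁻ y, F y) := by
  set X := qmap F R with hX
  set Jr := (∫⁻ y, F y).toReal with hJr'
  have hJr : 0 < Jr := ENNReal.toReal_pos hJ0 hJtop
  have hMpos : 0 < M := by
    rcases eq_or_lt_of_le hM with h | h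
    · exfalso
      apply hJ0
      have : ∀ x, F x = 0 := fun x => le_antisymm (by simpa [← h] using hbd x) (zero_le)
      simp [funext this]
    · exact h
  have hXmono : Monotone X := qmap_mono hM hbd hsupp hR hJ0 hJtop
  have hXstrict := qmap_strict hM hbd hsupp hR hJ0 hJtop
  set d : ℝ → ℝ := fun w => (Measure.rnDeriv hXmono.stieltjesFunction.measure volume w).toReal
    with hd
  have hdmeas : Measurable d := (Measure.measurable_rnDeriv _ _).ennreal_toReal
  have hd0 : ∀ w, 0 ≤ d w := fun w => ENNReal.toReal_nonneg
  refine ⟨d, hdmeas, hd0, ?_⟩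
  have hXcdf : ∀ w ∈ Ioo (0:ℝ) 1, cdf F (X w) = w * Jr :=
    fun w hw => (qmap_cdf hM hbd hsupp hJ0 hJtop hw).1
  have hslope : ∀ w ∈ Ioo (0:ℝ) 1, ∀ w' ∈ Ioo (0:ℝ) 1, w < w' →
      Jr * (w' - w) ≤ M * (X w' - X w) := by
    intro w hw w' hw' hlt
    have hlip := cdf_lipschitz hJtop hM hbd (hXmono hlt.le)
    rw [hXcdf w hw, hXcdf w' hw'] at hlip
    nlinarith
  have hae1 : ∀ᵐ w, HasDerivAt X (d w) w := hXmono.ae_hasDerivAt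
  have hae2 := cdf_ae_deriv hF hM hbd hJtop
  set N := {x | ¬ HasDerivAt (cdf F) ((F x).toReal) x} with hN'
  have hN : volume N = 0 := ae_iff.1 hae2
  obtain ⟨E, hNE, hEmeas, hE0⟩ := exists_measurable_superset_of_null hN
  set T := {w | ¬ HasDerivAt X (d w) w} with hT'
  have hT : volume T = 0 := ae_iff.1 hae1
  obtain ⟨B, hTB, hBmeas, hB0⟩ := exists_measurable_superset_of_null hT
  set sgood := Ioo (0:ℝ) 1 \ B with hsgood'
  have hsgood_meas : MeasurableSet sgood := measurableSet_Ioo.diff hBmeas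
  have hsgoodT : ∀ w ∈ sgood, HasDerivAt X (d w) w := by
    intro w hw
    by_contra h
    exact hw.2 (hTB h)
  have hdlb : ∀ w ∈ sgood, Jr / M ≤ d w := by
    intro w hw
    have hwI : w ∈ Ioo (0:ℝ) 1 := hw.1
    have hXd := hsgoodT w hw
    rw [hasDerivAt_iff_tendsto_slope] at hXd
    refine ge_of_tendsto hXd ?_
    have hev : ∀ᶠ y in 𝓝[≠] w, y ∈ Ioo (0:ℝ) 1 :=
      eventually_nhdsWithin_of_eventually_nhds (isOpen_Ioo.eventually_mem hwI)
    filter_upwards [hev, self_mem_nhdsWithin] with y hy hyne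
    have hyne' : y ≠ w := hyne
    rw [slope_def_field]
    rcases lt_or_gt_of_ne hyne' with hlt | hgt
    · have hs := hslope y hy w hwI hlt
      have heq : (X y - X w) / (y - w) = (X w - X y) / (w - y) := by
        rw [div_eq_div_iff (by linarith) (by linarith)]
        ring
      rw [heq, le_div_iff₀ (by linarith)]
      have hc : Jr / M * M = Jr := div_mul_cancel₀ _ (ne_of_gt hMpos)
      nlinarith
    · have hs := hslope w hwI y hy hgt
      rw [le_div_iff₀ (by linarith)]
      have hc : Jr / M * M = Jr := div_mul_cancel₀ _ (ne_of_gt hMpos)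
      nlinarith
  set sbad := sgood ∩ X ⁻¹' E with hsbad'
  have hsbad_meas : MeasurableSet sbad := hsgood_meas.inter (hXmono.measurable hEmeas)
  have himg0 : volume (X '' sbad) = 0 :=
    measure_mono_null (by
      intro y hy
      obtain ⟨w, hw, rfl⟩ := hy
      exact hw.2) hE0
  have hjac := lintegral_image_eq_lintegral_abs_det_fderiv_mul volume hsbad_meas
      (f' := fun w => ContinuousLinearMap.smulRight (1 : ℝ →L[ℝ] ℝ) (d w))
      (fun w hw => ((hsgoodT w hw.1).hasDerivWithinAt).hasFDerivWithinAt)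
      ((hXstrict.injOn).mono (fun w hw => hw.1.1))
      (fun _ => 1)
  rw [setLIntegral_one, himg0] at hjac
  have hsbad0 : volume sbad = 0 := by
    by_contra hpos
    have hlow : ENNReal.ofReal (Jr / M) * volume sbad ≤
        ∫⁻ w in sbad, ENNReal.ofReal |ContinuousLinearMap.det
          (ContinuousLinearMap.smulRight (1 : ℝ →L[ℝ] ℝ) (d w))| * 1 := by
      rw [← setLIntegral_const]
      refine setLIntegral_mono' hsbad_meas (fun w hw => ?_)
      rw [ContinuousLinearMap.smulRight_one_eq_toSpanSingleton, ContinuousLinearMap.det_toSpanSingleton, mul_one]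
      exact ENNReal.ofReal_le_ofReal (le_trans (hdlb w hw.1) (le_abs_self _))
    rw [← hjac] at hlow
    have h1 : ENNReal.ofReal (Jr / M) ≠ 0 := by
      simp only [ne_eq, ENNReal.ofReal_eq_zero, not_le]
      positivity
    rw [le_zero_iff, mul_eq_zero] at hlow
    tauto
  have hgood1 : ∀ᵐ w : ℝ, w ∉ B := (measure_eq_zero_iff_ae_notMem).1 hB0
  have hgood2 : ∀ᵐ w : ℝ, w ∉ sbad := (measure_eq_zero_iff_ae_notMem).1 hsbad0
  filter_upwards [hgood1, hgood2] with w hw1 hw2 hwI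
  have hws : w ∈ sgood := ⟨hwI, hw1⟩
  have hXd : HasDerivAt X (d w) w := hsgoodT w hws
  refine ⟨hXd, ?_⟩
  have hxE : X w ∉ E := fun hmem => hw2 ⟨hws, hmem⟩
  have hΦ : HasDerivAt (cdf F) ((F (X w)).toReal) (X w) := by
    by_contra h
    exact hxE (hNE h)
  have hcomp : HasDerivAt (cdf F ∘ X) ((F (X w)).toReal * d w) w := hΦ.comp w hXd
  have heq : (cdf F ∘ X) =ᶠ[nhds w] fun w' => w' * Jr := by
    filter_upwards [isOpen_Ioo.eventually_mem hwI] with y hy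
    exact hXcdf y hy
  have hlin : HasDerivAt (fun w' : ℝ => w' * Jr) ((F (X w)).toReal * d w) w :=
    hcomp.congr_of_eventuallyEq heq.symm
  have hval : (F (X w)).toReal * d w = Jr := by
    have h2 : HasDerivAt (fun w' : ℝ => w' * Jr) Jr w := hasDerivAt_mul_const Jr
    exact hlin.unique h2
  have hFfin : F (X w) ≠ ⊤ := ne_top_of_le_ne_top ENNReal.ofReal_ne_top (hbd _)
  calc F (X w) * ENNReal.ofReal (d w)
      = ENNReal.ofReal ((F (X w)).toReal * d w) := by
        rw [ENNReal.ofReal_mul ENNReal.toReal_nonneg, ENNReal.ofReal_toReal hFfin]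
    _ = ∫⁻ y, F y := by rw [hval, hJr', ENNReal.ofReal_toReal hJtop]

end Quant


section OneDim

lemma image_bound (G : ℝ → ℝ≥0∞) (u : ℝ → ℝ) (du : ℝ → ℝ)
    (hinj : InjOn u (Ioo (0:ℝ) 1)) (hdu0 : ∀ w, 0 ≤ du w)
    (hae : ∀ᵐ w, w ∈ Ioo (0:ℝ) 1 → HasDerivAt u (du w) w) :
    ∫⁻ w in Ioo (0:ℝ) 1, G (u w) * ENNReal.ofReal (du w) ≤ ∫⁻ y, G y := by
  obtain ⟨B, hTB, hBmeas, hB0⟩ := exists_measurable_superset_of_null (ae_iff.1 hae)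
  set sg := Ioo (0:ℝ) 1 \ B with hsg
  have hsgmeas : MeasurableSet sg := measurableSet_Ioo.diff hBmeas
  have hd : ∀ w ∈ sg, HasDerivAt u (du w) w := by
    intro w hw
    by_contra h
    exact hw.2 (hTB (fun hcon => h (hcon hw.1)))
  have heqset : sg =ᵐ[volume] Ioo (0:ℝ) 1 := by
    refine MeasureTheory.ae_eq_set.2 ⟨?_, ?_⟩
    · rw [show sg \ Ioo (0:ℝ) 1 = ∅ from by
        ext w
        simp only [hsg, mem_diff, mem_empty_iff_false, iff_false, not_and, not_not]
        tauto]
      exact measure_empty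
    · refine measure_mono_null (fun w hw => ?_) hB0
      by_contra hB
      exact hw.2 ⟨hw.1, hB⟩
  rw [setLIntegral_congr heqset.symm]
  have hjac := lintegral_image_eq_lintegral_abs_det_fderiv_mul volume hsgmeas
      (f' := fun w => ContinuousLinearMap.smulRight (1 : ℝ →L[ℝ] ℝ) (du w))
      (fun w hw => ((hd w hw).hasDerivWithinAt).hasFDerivWithinAt)
      (hinj.mono fun w hw => hw.1) G
  have hre : ∫⁻ w in sg, G (u w) * ENNReal.ofReal (du w)
      = ∫⁻ w in sg, ENNReal.ofReal
        |(ContinuousLinearMap.smulRight (1:ℝ→L[ℝ]ℝ) (du w)).det| * G (u w) := by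
    refine setLIntegral_congr_fun hsgmeas (fun w hw => ?_)
    rw [ContinuousLinearMap.smulRight_one_eq_toSpanSingleton, ContinuousLinearMap.det_toSpanSingleton, abs_of_nonneg (hdu0 w), mul_comm]
  rw [hre, ← hjac]
  exact lintegral_mono' Measure.restrict_le_self le_rfl

lemma onedim_bounded {r s t m : ℝ}
    (hr0 : 0 ≤ r) (hr1 : r ≤ 1) (hs0 : 0 ≤ s) (hs1 : s ≤ 1) (ht0 : 0 ≤ t) (ht1 : t ≤ 1)
    (hm : m = (1 - r) * s + r * t) (hm0 : 0 < m) (hm1 : m < 1)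
    (F₀ F₁ G₀ G₁ : ℝ → ℝ≥0∞)
    (hF₀ : Measurable F₀) (hF₁ : Measurable F₁) (hG₀ : Measurable G₀) (hG₁ : Measurable G₁)
    {M R : ℝ} (hM : 0 ≤ M) (hR : 0 ≤ R)
    (hbd₀ : ∀ x, F₀ x ≤ ENNReal.ofReal M) (hbd₁ : ∀ x, F₁ x ≤ ENNReal.ofReal M)
    (hsupp₀ : ∀ x, x ∉ Icc (-R) R → F₀ x = 0) (hsupp₁ : ∀ x, x ∉ Icc (-R) R → F₁ x = 0)
    (hJ₀0 : (∫⁻ y, F₀ y) ≠ 0) (hJ₀top : (∫⁻ y, F₀ y) ≠ ⊤)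
    (hJ₁0 : (∫⁻ y, F₁ y) ≠ 0) (hJ₁top : (∫⁻ y, F₁ y) ≠ ⊤)
    (hyp : ∀ x₀ x₁ : ℝ, F₀ x₀ ^ (1 - m) * F₁ x₁ ^ m ≤
      G₀ ((1 - s) * x₀ + s * x₁) ^ (1 - r) * G₁ ((1 - t) * x₀ + t * x₁) ^ r) :
    (∫⁻ y, F₀ y) ^ (1-m) * (∫⁻ y, F₁ y) ^ m
      ≤ (∫⁻ y, G₀ y) ^ (1-r) * (∫⁻ y, G₁ y) ^ r := by
  obtain ⟨d₀, hd₀meas, hd₀0, hae₀⟩ := transport_exists hF₀ hM hR hbd₀ hsupp₀ hJ₀0 hJ₀top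
  obtain ⟨d₁, hd₁meas, hd₁0, hae₁⟩ := transport_exists hF₁ hM hR hbd₁ hsupp₁ hJ₁0 hJ₁top
  set X₀ := qmap F₀ R with hX₀
  set X₁ := qmap F₁ R with hX₁
  set u := fun w => (1-s) * X₀ w + s * X₁ w with hu
  set v := fun w => (1-t) * X₀ w + t * X₁ w with hv
  set du := fun w => (1-s) * d₀ w + s * d₁ w with hdu
  set dv := fun w => (1-t) * d₀ w + t * d₁ w with hdv
  have hX₀s := qmap_strict hM hbd₀ hsupp₀ hR hJ₀0 hJ₀top
  have hX₁s := qmap_strict hM hbd₁ hsupp₁ hR hJ₁0 hJ₁top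
  have hX₀m := qmap_mono hM hbd₀ hsupp₀ hR hJ₀0 hJ₀top
  have hX₁m := qmap_mono hM hbd₁ hsupp₁ hR hJ₁0 hJ₁top
  have hcomb_strict : ∀ (c : ℝ), 0 ≤ c → c ≤ 1 →
      StrictMonoOn (fun w => (1-c) * X₀ w + c * X₁ w) (Ioo (0:ℝ) 1) := by
    intro c hc0 hc1 a ha b hb hab
    have h0 := hX₀s ha hb hab
    have h1 := hX₁s ha hb hab
    dsimp only
    rcases eq_or_lt_of_le hc1 with hc | hc
    · rw [hc]; nlinarith
    · nlinarith [mul_pos (by linarith : (0:ℝ) < 1 - c) (sub_pos.2 h0),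
        mul_nonneg hc0 (sub_pos.2 h1).le]
  have hcomb_mono : ∀ (c : ℝ), 0 ≤ c → c ≤ 1 →
      Monotone (fun w => (1-c) * X₀ w + c * X₁ w) := by
    intro c hc0 hc1 a b hab
    have h0 := hX₀m hab
    have h1 := hX₁m hab
    dsimp only
    nlinarith [mul_nonneg (by linarith : (0:ℝ) ≤ 1 - c) (sub_nonneg.2 h0),
      mul_nonneg hc0 (sub_nonneg.2 h1)]
  have humeas : Measurable u := (hcomb_mono s hs0 hs1).measurable
  have hvmeas : Measurable v := (hcomb_mono t ht0 ht1).measurable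
  have hdumeas : Measurable du := (hd₀meas.const_mul _).add (hd₁meas.const_mul _)
  have hdvmeas : Measurable dv := (hd₀meas.const_mul _).add (hd₁meas.const_mul _)
  have hdu0 : ∀ w, 0 ≤ du w := fun w =>
    add_nonneg (mul_nonneg (by linarith) (hd₀0 w)) (mul_nonneg hs0 (hd₁0 w))
  have hdv0 : ∀ w, 0 ≤ dv w := fun w =>
    add_nonneg (mul_nonneg (by linarith) (hd₀0 w)) (mul_nonneg ht0 (hd₁0 w))
  have haeu : ∀ᵐ w : ℝ, w ∈ Ioo (0:ℝ) 1 → HasDerivAt u (du w) w := by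
    filter_upwards [hae₀, hae₁] with w h₀ h₁ hw
    exact ((h₀ hw).1.const_mul (1-s)).add ((h₁ hw).1.const_mul s)
  have haev : ∀ᵐ w : ℝ, w ∈ Ioo (0:ℝ) 1 → HasDerivAt v (dv w) w := by
    filter_upwards [hae₀, hae₁] with w h₀ h₁ hw
    exact ((h₀ hw).1.const_mul (1-t)).add ((h₁ hw).1.const_mul t)
  have hIoo1 : volume (Ioo (0:ℝ) 1) = 1 := by rw [Real.volume_Ioo]; norm_num
  have step2 : (∫⁻ y, F₀ y) ^ (1-m) * (∫⁻ y, F₁ y) ^ m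
      ≤ ∫⁻ w in Ioo (0:ℝ) 1,
          (G₀ (u w) * ENNReal.ofReal (du w)) ^ (1-r)
            * (G₁ (v w) * ENNReal.ofReal (dv w)) ^ r := by
    have hconst : (∫⁻ y, F₀ y) ^ (1-m) * (∫⁻ y, F₁ y) ^ m
        = ∫⁻ _ in Ioo (0:ℝ) 1, ((∫⁻ y, F₀ y) ^ (1-m) * (∫⁻ y, F₁ y) ^ m) := by
      rw [setLIntegral_const, hIoo1, mul_one]
    rw [hconst]
    refine lintegral_mono_ae ((ae_restrict_iff' measurableSet_Ioo).2 ?_)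
    filter_upwards [hae₀, hae₁] with w h₀ h₁ hw
    obtain ⟨hD₀, he₀⟩ := h₀ hw
    obtain ⟨hD₁, he₁⟩ := h₁ hw
    calc (∫⁻ y, F₀ y) ^ (1-m) * (∫⁻ y, F₁ y) ^ m
        = (F₀ (X₀ w) * ENNReal.ofReal (d₀ w)) ^ (1-m)
            * (F₁ (X₁ w) * ENNReal.ofReal (d₁ w)) ^ m := by rw [he₀, he₁]
      _ = (F₀ (X₀ w) ^ (1-m) * F₁ (X₁ w) ^ m)
            * (ENNReal.ofReal (d₀ w) ^ (1-m) * ENNReal.ofReal (d₁ w) ^ m) := by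
          rw [ENNReal.mul_rpow_of_nonneg _ _ (by linarith : (0:ℝ) ≤ 1 - m),
            ENNReal.mul_rpow_of_nonneg _ _ hm0.le]
          ring
      _ ≤ (G₀ (u w) ^ (1-r) * G₁ (v w) ^ r)
            * (ENNReal.ofReal (du w) ^ (1-r) * ENNReal.ofReal (dv w) ^ r) := by
          refine mul_le_mul' (hyp _ _) ?_
          exact rpow_interp_ennreal (hd₀0 w) (hd₁0 w) hr0 hr1 hs0 hs1 ht0 ht1 hm
            hm0.le hm1.le
      _ = (G₀ (u w) * ENNReal.ofReal (du w)) ^ (1-r)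
            * (G₁ (v w) * ENNReal.ofReal (dv w)) ^ r := by
          rw [ENNReal.mul_rpow_of_nonneg _ _ (by linarith : (0:ℝ) ≤ 1 - r),
            ENNReal.mul_rpow_of_nonneg _ _ hr0]
          ring
  have step3 : ∫⁻ w in Ioo (0:ℝ) 1,
      (G₀ (u w) * ENNReal.ofReal (du w)) ^ (1-r)
        * (G₁ (v w) * ENNReal.ofReal (dv w)) ^ r
      ≤ (∫⁻ w in Ioo (0:ℝ) 1, G₀ (u w) * ENNReal.ofReal (du w)) ^ (1-r)
        * (∫⁻ w in Ioo (0:ℝ) 1, G₁ (v w) * ENNReal.ofReal (dv w)) ^ r :=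
    ENNReal.lintegral_mul_norm_pow_le
      (((hG₀.comp humeas).mul hdumeas.ennreal_ofReal).aemeasurable)
      (((hG₁.comp hvmeas).mul hdvmeas.ennreal_ofReal).aemeasurable)
      (by linarith) hr0 (by ring)
  have hbnd₀ : ∫⁻ w in Ioo (0:ℝ) 1, G₀ (u w) * ENNReal.ofReal (du w) ≤ ∫⁻ y, G₀ y :=
    image_bound G₀ u du (hcomb_strict s hs0 hs1).injOn hdu0 haeu
  have hbnd₁ : ∫⁻ w in Ioo (0:ℝ) 1, G₁ (v w) * ENNReal.ofReal (dv w) ≤ ∫⁻ y, G₁ y :=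
    image_bound G₁ v dv (hcomb_strict t ht0 ht1).injOn hdv0 haev
  refine le_trans step2 (le_trans step3 (mul_le_mul' ?_ ?_))
  · exact ENNReal.rpow_le_rpow hbnd₀ (by linarith)
  · exact ENNReal.rpow_le_rpow hbnd₁ hr0

end OneDim

section Trunc

noncomputable def trunc (F : ℝ → ℝ≥0∞) (K : ℕ) : ℝ → ℝ≥0∞ :=
  fun x => if x ∈ Icc (-(K:ℝ)) (K:ℝ) then min (F x) K else 0

variable {F : ℝ → ℝ≥0∞} {K : ℕ}

lemma trunc_le : ∀ x, trunc F K x ≤ F x := by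
  intro x
  unfold trunc
  split
  · exact min_le_left _ _
  · exact zero_le

lemma trunc_meas (hF : Measurable F) : Measurable (trunc F K) :=
  Measurable.ite measurableSet_Icc (hF.min measurable_const) measurable_const

lemma trunc_bd : ∀ x, trunc F K x ≤ ENNReal.ofReal (K:ℝ) := by
  intro x
  rw [ENNReal.ofReal_natCast]
  unfold trunc
  split
  · exact min_le_right _ _
  · exact zero_le

lemma trunc_supp : ∀ x, x ∉ Icc (-(K:ℝ)) (K:ℝ) → trunc F K x = 0 := fun _ h => if_neg h

lemma trunc_ne_top : (∫⁻ x, trunc F K x) ≠ ⊤ := by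
  have h : ∀ x, trunc F K x ≤ Set.indicator (Icc (-(K:ℝ)) (K:ℝ)) (fun _ => (K:ℝ≥0∞)) x := by
    intro x
    unfold trunc
    split
    · rename_i hx
      rw [Set.indicator_of_mem hx]
      exact min_le_right _ _
    · exact zero_le
  refine ne_top_of_le_ne_top ?_ (lintegral_mono h)
  rw [lintegral_indicator measurableSet_Icc, setLIntegral_const]
  exact ENNReal.mul_ne_top (by simp) (by simp [Real.volume_Icc])

lemma trunc_mono_K : Monotone (trunc F) := by
  intro K L hKL x
  unfold trunc
  split
  · rename_i hx
    rw [if_pos (Icc_subset_Icc (by simp [hKL]) (by exact_mod_cast hKL) hx)]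
    exact min_le_min le_rfl (by exact_mod_cast hKL)
  · exact zero_le

lemma trunc_iSup : ∀ x, ⨆ K, trunc F K x = F x := by
  intro x
  refine le_antisymm (iSup_le fun K => trunc_le x) ?_
  obtain ⟨K₀, hK₀⟩ := exists_nat_ge |x|
  have hmem : ∀ L : ℕ, K₀ ≤ L → x ∈ Icc (-(L:ℝ)) (L:ℝ) := by
    intro L hL
    have : |x| ≤ (L : ℝ) := le_trans hK₀ (by exact_mod_cast hL)
    exact ⟨neg_le_of_abs_le this, le_of_abs_le this⟩
  rcases eq_or_ne (F x) ⊤ with htop | hfin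
  · rw [htop]
    have hsup : ∀ n : ℕ, (n : ℝ≥0∞) ≤ ⨆ K, trunc F K x := by
      intro n
      refine le_iSup_of_le (max n K₀) ?_
      have htr : trunc F (max n K₀) x = min (F x) ((max n K₀ : ℕ) : ℝ≥0∞) :=
        if_pos (hmem _ (le_max_right _ _))
      rw [htr, htop, top_inf_eq]
      exact_mod_cast Nat.le_max_left n K₀
    calc (⊤:ℝ≥0∞) = ⨆ n : ℕ, (n : ℝ≥0∞) := ENNReal.iSup_natCast.symm
      _ ≤ ⨆ K, trunc F K x := iSup_le hsup
  · obtain ⟨K₁, hK₁⟩ := ENNReal.exists_nat_gt hfin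
    refine le_iSup_of_le (max K₁ K₀) ?_
    have htr : trunc F (max K₁ K₀) x = min (F x) ((max K₁ K₀ : ℕ) : ℝ≥0∞) :=
      if_pos (hmem _ (le_max_right _ _))
    rw [htr]
    refine le_min le_rfl ?_
    exact le_trans hK₁.le (by exact_mod_cast Nat.le_max_left K₁ K₀)

lemma trunc_tendsto (hF : Measurable F) :
    Tendsto (fun K => ∫⁻ x, trunc F K x) atTop (𝓝 (∫⁻ x, F x)) := by
  have heq : (∫⁻ x, F x) = ⨆ K, ∫⁻ x, trunc F K x := by
    rw [← lintegral_iSup (fun K => trunc_meas hF) trunc_mono_K]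
    congr 1
    funext x
    exact (trunc_iSup (F := F) x).symm
  rw [heq]
  exact tendsto_atTop_iSup (fun K L hKL => lintegral_mono (trunc_mono_K hKL))

end Trunc

lemma onedim {r s t m : ℝ}
    (hr0 : 0 ≤ r) (hr1 : r ≤ 1) (hs0 : 0 ≤ s) (hs1 : s ≤ 1) (ht0 : 0 ≤ t) (ht1 : t ≤ 1)
    (hm : m = (1 - r) * s + r * t)
    (F₀ F₁ G₀ G₁ : ℝ → ℝ≥0∞)
    (hF₀ : Measurable F₀) (hF₁ : Measurable F₁) (hG₀ : Measurable G₀) (hG₁ : Measurable G₁)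
    (hyp : ∀ x₀ x₁ : ℝ, F₀ x₀ ^ (1 - m) * F₁ x₁ ^ m ≤
      G₀ ((1 - s) * x₀ + s * x₁) ^ (1 - r) * G₁ ((1 - t) * x₀ + t * x₁) ^ r) :
    (∫⁻ y, F₀ y) ^ (1-m) * (∫⁻ y, F₁ y) ^ m
      ≤ (∫⁻ y, G₀ y) ^ (1-r) * (∫⁻ y, G₁ y) ^ r := by
  have hm0 : 0 ≤ m := by
    rw [hm]
    nlinarith [mul_nonneg (by linarith : (0:ℝ) ≤ 1-r) hs0, mul_nonneg hr0 ht0]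
  have hm1 : m ≤ 1 := by
    rw [hm]
    nlinarith [mul_le_mul_of_nonneg_left hs1 (by linarith : (0:ℝ) ≤ 1-r),
      mul_le_mul_of_nonneg_left ht1 hr0]
  have hdiag : ∀ x : ℝ, G₀ ((1-s)*x + s*x) ^ (1-r) * G₁ ((1-t)*x + t*x) ^ r
      = G₀ x ^ (1-r) * G₁ x ^ r := by
    intro x
    rw [show (1-s)*x + s*x = x by ring, show (1-t)*x+t*x = x by ring]
  have hHolder : ∫⁻ x, G₀ x ^ (1-r) * G₁ x ^ r
      ≤ (∫⁻ y, G₀ y)^(1-r) * (∫⁻ y, G₁ y)^r :=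
    ENNReal.lintegral_mul_norm_pow_le hG₀.aemeasurable hG₁.aemeasurable
      (by linarith) hr0 (by ring)
  rcases eq_or_lt_of_le hm0 with hm0' | hm0'
  · rw [← hm0', sub_zero, ENNReal.rpow_one, ENNReal.rpow_zero, mul_one]
    have hpt : ∀ x, F₀ x ≤ G₀ x ^ (1-r) * G₁ x ^ r := by
      intro x
      have hx := hyp x x
      rw [hdiag x] at hx
      rwa [← hm0', sub_zero, ENNReal.rpow_one, ENNReal.rpow_zero, mul_one] at hx
    exact le_trans (lintegral_mono hpt) hHolder
  rcases eq_or_lt_of_le hm1 with hm1' | hm1'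
  · rw [hm1', sub_self, ENNReal.rpow_zero, ENNReal.rpow_one, one_mul]
    have hpt : ∀ x, F₁ x ≤ G₀ x ^ (1-r) * G₁ x ^ r := by
      intro x
      have hx := hyp x x
      rw [hdiag x] at hx
      rwa [hm1', sub_self, ENNReal.rpow_zero, ENNReal.rpow_one, one_mul] at hx
    exact le_trans (lintegral_mono hpt) hHolder
  rcases eq_or_ne (∫⁻ y, F₀ y) 0 with hJ0 | hJ0
  · rw [hJ0, ENNReal.zero_rpow_of_pos (by linarith), zero_mul]
    exact zero_le
  rcases eq_or_ne (∫⁻ y, F₁ y) 0 with hJ1 | hJ1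
  · rw [hJ1, ENNReal.zero_rpow_of_pos hm0', mul_zero]
    exact zero_le
  set A := fun K => ∫⁻ x, trunc F₀ K x with hA
  set B := fun K => ∫⁻ x, trunc F₁ K x with hB
  have hkey : ∀ K : ℕ, A K ^ (1-m) * B K ^ m
      ≤ (∫⁻ y, G₀ y)^(1-r) * (∫⁻ y, G₁ y)^r := by
    intro K
    rcases eq_or_ne (A K) 0 with h0 | h0
    · rw [h0, ENNReal.zero_rpow_of_pos (by linarith), zero_mul]
      exact zero_le
    rcases eq_or_ne (B K) 0 with h1 | h1
    · rw [h1, ENNReal.zero_rpow_of_pos hm0', mul_zero]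
      exact zero_le
    refine onedim_bounded hr0 hr1 hs0 hs1 ht0 ht1 hm hm0' hm1'
      (trunc F₀ K) (trunc F₁ K) G₀ G₁ (trunc_meas hF₀) (trunc_meas hF₁) hG₀ hG₁
      (M := (K:ℝ)) (R := (K:ℝ)) (Nat.cast_nonneg K) (Nat.cast_nonneg K)
      (fun x => trunc_bd x) (fun x => trunc_bd x)
      (fun x hx => trunc_supp x hx) (fun x hx => trunc_supp x hx)
      h0 trunc_ne_top h1 trunc_ne_top ?_
    intro x₀ x₁
    refine le_trans ?_ (hyp x₀ x₁)
    exact mul_le_mul' (ENNReal.rpow_le_rpow (trunc_le x₀) (by linarith))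
      (ENNReal.rpow_le_rpow (trunc_le x₁) hm0'.le)
  have htendA : Tendsto A atTop (𝓝 (∫⁻ y, F₀ y)) := trunc_tendsto hF₀
  have htendB : Tendsto B atTop (𝓝 (∫⁻ y, F₁ y)) := trunc_tendsto hF₁
  have htend : Tendsto (fun K => A K ^ (1-m) * B K ^ m) atTop
      (𝓝 ((∫⁻ y, F₀ y) ^ (1-m) * (∫⁻ y, F₁ y) ^ m)) := by
    refine ENNReal.Tendsto.mul
      ((ENNReal.continuous_rpow_const.tendsto _).comp htendA) ?_
      ((ENNReal.continuous_rpow_const.tendsto _).comp htendB) ?_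
    · left
      simp only [ne_eq, ENNReal.rpow_eq_zero_iff, not_or, not_and, not_lt]
      exact ⟨fun h => absurd h hJ0, fun _ => by linarith⟩
    · left
      simp only [ne_eq, ENNReal.rpow_eq_zero_iff, not_or, not_and, not_lt]
      exact ⟨fun h => absurd h hJ1, fun _ => by linarith⟩
  exact le_of_tendsto htend (Filter.Eventually.of_forall hkey)

section Induction

lemma pi_dim (n : ℕ) {r s t m : ℝ}
    (hr0 : 0 ≤ r) (hr1 : r ≤ 1) (hs0 : 0 ≤ s) (hs1 : s ≤ 1) (ht0 : 0 ≤ t) (ht1 : t ≤ 1)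
    (hm : m = (1 - r) * s + r * t) :
    ∀ (F₀ F₁ G₀ G₁ : (Fin n → ℝ) → ℝ≥0∞),
    Measurable F₀ → Measurable F₁ → Measurable G₀ → Measurable G₁ →
    (∀ x₀ x₁ : Fin n → ℝ, F₀ x₀ ^ (1-m) * F₁ x₁ ^ m ≤
      G₀ ((1-s) • x₀ + s • x₁) ^ (1-r) * G₁ ((1-t) • x₀ + t • x₁) ^ r) →
    (∫⁻ x, F₀ x) ^ (1-m) * (∫⁻ x, F₁ x) ^ m
      ≤ (∫⁻ x, G₀ x) ^ (1-r) * (∫⁻ x, G₁ x) ^ r := by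
  induction n with
  | zero =>
    intro F₀ F₁ G₀ G₁ _ _ _ _ hyp
    have huniv : (volume : Measure (Fin 0 → ℝ)) Set.univ = 1 := by
      rw [show (volume : Measure (Fin 0 → ℝ)) = Measure.pi (fun _ => volume) from rfl,
        Measure.pi_univ]
      simp
    have hlint : ∀ (f : (Fin 0 → ℝ) → ℝ≥0∞), (∫⁻ x, f x) = f default := by
      intro f
      rw [show f = fun _ => f default from funext fun x => by
        rw [Subsingleton.elim x default], lintegral_const, huniv, mul_one]
    rw [hlint, hlint, hlint, hlint]
    have h := hyp default default
    rwa [Subsingleton.elim ((1-s) • (default : Fin 0 → ℝ) + s • default) default,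
      Subsingleton.elim ((1-t) • (default : Fin 0 → ℝ) + t • default) default] at h
  | succ n ih =>
    intro F₀ F₁ G₀ G₁ hF₀ hF₁ hG₀ hG₁ hyp
    set e := MeasurableEquiv.piFinSuccAbove (fun _ : Fin (n+1) => ℝ) 0 with he
    have hmp : MeasurePreserving e volume volume :=
      volume_preserving_piFinSuccAbove (fun _ : Fin (n+1) => ℝ) 0
    have he_lin : ∀ (c c' : ℝ) (x y : Fin (n+1) → ℝ),
        e (c • x + c' • y) = c • e x + c' • e y := by
      intro c c' x y
      rfl
    have hsymm_lin : ∀ (c c' : ℝ) (p q : ℝ × (Fin n → ℝ)),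
        (1 : ℕ) = 1 → e.symm (c • p + c' • q) = c • e.symm p + c' • e.symm q := by
      intro c c' p q _
      apply e.injective
      rw [MeasurableEquiv.apply_symm_apply, he_lin,
        MeasurableEquiv.apply_symm_apply, MeasurableEquiv.apply_symm_apply]
    set F₀' : ℝ × (Fin n → ℝ) → ℝ≥0∞ := fun p => F₀ (e.symm p) with hF₀'
    set F₁' : ℝ × (Fin n → ℝ) → ℝ≥0∞ := fun p => F₁ (e.symm p) with hF₁'
    set G₀' : ℝ × (Fin n → ℝ) → ℝ≥0∞ := fun p => G₀ (e.symm p) with hG₀'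
    set G₁' : ℝ × (Fin n → ℝ) → ℝ≥0∞ := fun p => G₁ (e.symm p) with hG₁'
    have hmF₀ : Measurable F₀' := hF₀.comp e.symm.measurable
    have hmF₁ : Measurable F₁' := hF₁.comp e.symm.measurable
    have hmG₀ : Measurable G₀' := hG₀.comp e.symm.measurable
    have hmG₁ : Measurable G₁' := hG₁.comp e.symm.measurable
    have hint : ∀ (f : (Fin (n+1) → ℝ) → ℝ≥0∞), Measurable f →
        (∫⁻ x, f x) = ∫⁻ p, f (e.symm p) := by
      intro f hf
      exact (MeasurePreserving.lintegral_comp (hmp.symm) hf).symm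
    have hyp' : ∀ p₀ p₁ : ℝ × (Fin n → ℝ), F₀' p₀ ^ (1-m) * F₁' p₁ ^ m ≤
        G₀' ((1-s) • p₀ + s • p₁) ^ (1-r) * G₁' ((1-t) • p₀ + t • p₁) ^ r := by
      intro p₀ p₁
      have h := hyp (e.symm p₀) (e.symm p₁)
      rwa [show (1-s) • e.symm p₀ + s • e.symm p₁ = e.symm ((1-s) • p₀ + s • p₁) from
          (hsymm_lin _ _ _ _ rfl).symm,
        show (1-t) • e.symm p₀ + t • e.symm p₁ = e.symm ((1-t) • p₀ + t • p₁) from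
          (hsymm_lin _ _ _ _ rfl).symm] at h
    -- marginals
    set mF₀ : ℝ → ℝ≥0∞ := fun a => ∫⁻ y, F₀' (a, y) with hmF₀'
    set mF₁ : ℝ → ℝ≥0∞ := fun a => ∫⁻ y, F₁' (a, y) with hmF₁'
    set mG₀ : ℝ → ℝ≥0∞ := fun a => ∫⁻ y, G₀' (a, y) with hmG₀'
    set mG₁ : ℝ → ℝ≥0∞ := fun a => ∫⁻ y, G₁' (a, y) with hmG₁'
    have hmmF₀ : Measurable mF₀ := hmF₀.lintegral_prod_right'
    have hmmF₁ : Measurable mF₁ := hmF₁.lintegral_prod_right'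
    have hmmG₀ : Measurable mG₀ := hmG₀.lintegral_prod_right'
    have hmmG₁ : Measurable mG₁ := hmG₁.lintegral_prod_right'
    have hyp1d : ∀ a b : ℝ, mF₀ a ^ (1-m) * mF₁ b ^ m ≤
        mG₀ ((1-s) * a + s * b) ^ (1-r) * mG₁ ((1-t) * a + t * b) ^ r := by
      intro a b
      refine ih (fun y => F₀' (a, y)) (fun y => F₁' (b, y))
        (fun y => G₀' ((1-s) * a + s * b, y)) (fun y => G₁' ((1-t) * a + t * b, y))
        (hmF₀.comp (measurable_prodMk_left)) (hmF₁.comp (measurable_prodMk_left))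
        (hmG₀.comp (measurable_prodMk_left)) (hmG₁.comp (measurable_prodMk_left))
        ?_
      intro y₀ y₁
      have h := hyp' (a, y₀) (b, y₁)
      have e₀ : (1-s) • ((a : ℝ), y₀) + s • ((b : ℝ), y₁)
          = ((1-s) * a + s * b, (1-s) • y₀ + s • y₁) := rfl
      have e₁ : (1-t) • ((a : ℝ), y₀) + t • ((b : ℝ), y₁)
          = ((1-t) * a + t * b, (1-t) • y₀ + t • y₁) := rfl
      rwa [e₀, e₁] at h
    have hfub : ∀ (f : ℝ × (Fin n → ℝ) → ℝ≥0∞), Measurable f →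
        (∫⁻ p, f p) = ∫⁻ a, ∫⁻ y, f (a, y) := by
      intro f hf
      rw [Measure.volume_eq_prod, lintegral_prod f hf.aemeasurable]
    calc (∫⁻ x, F₀ x) ^ (1-m) * (∫⁻ x, F₁ x) ^ m
        = (∫⁻ a, mF₀ a) ^ (1-m) * (∫⁻ a, mF₁ a) ^ m := by
          rw [hint F₀ hF₀, hint F₁ hF₁, hfub F₀' hmF₀, hfub F₁' hmF₁]
      _ ≤ (∫⁻ a, mG₀ a) ^ (1-r) * (∫⁻ a, mG₁ a) ^ r :=
          onedim hr0 hr1 hs0 hs1 ht0 ht1 hm mF₀ mF₁ mG₀ mG₁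
            hmmF₀ hmmF₁ hmmG₀ hmmG₁ hyp1d
      _ = (∫⁻ x, G₀ x) ^ (1-r) * (∫⁻ x, G₁ x) ^ r := by
          rw [hint G₀ hG₀, hint G₁ hG₁, hfub G₀' hmG₀, hfub G₁' hmG₁]

end Induction

theorem prop_M_gen (n : ℕ) (s t r m : ℝ)
    (hs0 : 0 ≤ s) (hs1 : s ≤ 1) (ht0 : 0 ≤ t) (ht1 : t ≤ 1) (hr0 : 0 ≤ r) (hr1 : r ≤ 1)
    (hm : m = (1 - r) * s + r * t)
    (f₀ f₁ g₀ g₁ : EuclideanSpace ℝ (Fin n) → EReal)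
    (hf₀ : Measurable f₀) (hf₁ : Measurable f₁) (hg₀ : Measurable g₀) (hg₁ : Measurable g₁)
    (hf₀' : ∀ x, f₀ x ≠ ⊥) (hf₁' : ∀ x, f₁ x ≠ ⊥)
    (hg₀' : ∀ x, g₀ x ≠ ⊥) (hg₁' : ∀ x, g₁ x ≠ ⊥)
    (h : ∀ x₀ x₁ : EuclideanSpace ℝ (Fin n),
      ((1 - r : ℝ) : EReal) * g₀ ((1 - s) • x₀ + s • x₁)
        + (r : EReal) * g₁ ((1 - t) • x₀ + t • x₁)
        ≤ ((1 - m : ℝ) : EReal) * f₀ x₀ + (m : EReal) * f₁ x₁) :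
    (∫⁻ x, expNeg (f₀ x)) ^ (1 - m) * (∫⁻ x, expNeg (f₁ x)) ^ m
      ≤ (∫⁻ x, expNeg (g₀ x)) ^ (1 - r) * (∫⁻ x, expNeg (g₁ x)) ^ r := by
  have hm0 : 0 ≤ m := by
    rw [hm]
    nlinarith [mul_nonneg (by linarith : (0:ℝ) ≤ 1-r) hs0, mul_nonneg hr0 ht0]
  have hm1 : m ≤ 1 := by
    rw [hm]
    nlinarith [mul_le_mul_of_nonneg_left hs1 (by linarith : (0:ℝ) ≤ 1-r),
      mul_le_mul_of_nonneg_left ht1 hr0]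
  set e := (MeasurableEquiv.toLp 2 (Fin n → ℝ)).symm with he
  have hmp : MeasurePreserving e volume volume :=
    EuclideanSpace.volume_preserving_symm_measurableEquiv_toLp (Fin n)
  set F₀ : (Fin n → ℝ) → ℝ≥0∞ := fun y => expNeg (f₀ (e.symm y)) with hF₀'
  set F₁ : (Fin n → ℝ) → ℝ≥0∞ := fun y => expNeg (f₁ (e.symm y)) with hF₁'
  set G₀ : (Fin n → ℝ) → ℝ≥0∞ := fun y => expNeg (g₀ (e.symm y)) with hG₀'
  set G₁ : (Fin n → ℝ) → ℝ≥0∞ := fun y => expNeg (g₁ (e.symm y)) with hG₁'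
  have hsymm_lin : ∀ (c c' : ℝ) (p q : Fin n → ℝ),
      e.symm (c • p + c' • q) = c • e.symm p + c' • e.symm q := by
    intro c c' p q
    rfl
  have hyp : ∀ x₀ x₁ : Fin n → ℝ, F₀ x₀ ^ (1-m) * F₁ x₁ ^ m ≤
      G₀ ((1-s) • x₀ + s • x₁) ^ (1-r) * G₁ ((1-t) • x₀ + t • x₁) ^ r := by
    intro x₀ x₁
    have hh := h (e.symm x₀) (e.symm x₁)
    rw [show (1-s) • e.symm x₀ + s • e.symm x₁ = e.symm ((1-s) • x₀ + s • x₁) from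
        (hsymm_lin _ _ _ _).symm,
      show (1-t) • e.symm x₀ + t • e.symm x₁ = e.symm ((1-t) • x₀ + t • x₁) from
        (hsymm_lin _ _ _ _).symm] at hh
    exact expNeg_hyp (hf₀' _) (hf₁' _) (hg₀' _) (hg₁' _)
      (by linarith) hr0 (by linarith) hm0 hh
  have htrans : ∀ (f : EuclideanSpace ℝ (Fin n) → EReal), Measurable f →
      (∫⁻ y, expNeg (f (e.symm y))) = ∫⁻ x, expNeg (f x) := by
    intro f hf
    exact MeasurePreserving.lintegral_comp hmp.symm (measurable_expNeg.comp hf)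
  have hmain := pi_dim n hr0 hr1 hs0 hs1 ht0 ht1 hm F₀ F₁ G₀ G₁
    (measurable_expNeg.comp (hf₀.comp e.symm.measurable))
    (measurable_expNeg.comp (hf₁.comp e.symm.measurable))
    (measurable_expNeg.comp (hg₀.comp e.symm.measurable))
    (measurable_expNeg.comp (hg₁.comp e.symm.measurable)) hyp
  rwa [htrans f₀ hf₀, htrans f₁ hf₁, htrans g₀ hg₀, htrans g₁ hg₁] at hmain
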